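/- Let (θ*¹,...,θ*ᵖ, y*) be an optimal solution of the dual Sparse-BSOS SDP of order d, and let ω be minimal with 2ω ≥ max{deg f, deg g_1, ..., deg g_m}. If rank M_ω(θ*ℓ) = 1 for every ℓ = 1,...,p, then the dual value equals the global optimum f* and the point x* := (y*_γ)_{|γ|=1} (the first-order moments of y*) lies in K and is a global minimizer of f on K. -/
import Mathlib


open MvPolynomial

/-- The Riesz functional associated with a (pseudo-)moment sequence `y`. -/
noncomputable def riesz {n : ℕ} (y : (Fin n →₀ ℕ) → ℝ) (f : MvPolynomial (Fin n) ℝ) : ℝ :=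
  ∑ γ ∈ f.support, f.coeff γ * y γ

/-- Positive semidefiniteness of the moment matrix `M_a(y)`, expressed via the
associated quadratic form on coefficient vectors supported on degree at most `a`. -/
def momentPSD {n : ℕ} (a : ℕ) (y : (Fin n →₀ ℕ) → ℝ) : Prop :=
  ∀ c : (Fin n →₀ ℕ) →₀ ℝ, (∀ γ ∈ c.support, (γ.sum fun _ e => e) ≤ a) →
    0 ≤ ∑ α ∈ c.support, ∑ β ∈ c.support, c α * c β * y (α + β)

/-- The moments `x^γ` of the Dirac measure at `x`. -/
noncomputable def monMoment {n : ℕ} (x : Fin n → ℝ) (γ : Fin n →₀ ℕ) : ℝ :=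
  γ.prod fun i e => x i ^ e

/-- Feasibility for the dual Sparse-BSOS SDP of order `d` with parameter `k`:
`y_0 = 1`, `y` agrees with `θ^ℓ` on monomials supported on `I_ℓ` of degree at most
`dmax`, each moment matrix `M_k(θ^ℓ)` is psd, and `L_{θ^ℓ}(h_{αβ}) ≥ 0` for all
`(α,β) ∈ N^ℓ_d`. -/
def DualFeasible {n m p : ℕ} (I : Fin p → Finset (Fin n)) (J : Fin p → Finset (Fin m))
    (g : Fin m → MvPolynomial (Fin n) ℝ) (k d dmax : ℕ)
    (θ : Fin p → (Fin n →₀ ℕ) → ℝ) (y : (Fin n →₀ ℕ) → ℝ) : Prop :=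
  y 0 = 1 ∧
  (∀ ℓ, ∀ γ : Fin n →₀ ℕ, (↑γ.support ⊆ (↑(I ℓ) : Set (Fin n))) →
    (γ.sum fun _ e => e) ≤ dmax → y γ = θ ℓ γ) ∧
  (∀ ℓ, momentPSD k (θ ℓ)) ∧
  (∀ ℓ, ∀ ab : (Fin m → ℕ) × (Fin m → ℕ),
    (∀ j, (ab.1 j ≠ 0 ∨ ab.2 j ≠ 0) → j ∈ J ℓ) → (∑ j, (ab.1 j + ab.2 j)) ≤ d →
    0 ≤ riesz (θ ℓ) (∏ j, g j ^ ab.1 j * (1 - g j) ^ ab.2 j))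

/-- A rank-one factorization of the moment matrix `M_ω(θ)`: `M_ω(θ) = v vᵀ`
with first entry `v_0 = 1`. -/
def RankOneFactor {n : ℕ} (ω : ℕ) (θ : (Fin n →₀ ℕ) → ℝ) : Prop :=
  ∃ v : (Fin n →₀ ℕ) → ℝ, v 0 = 1 ∧
    ∀ α β : Fin n →₀ ℕ, (α.sum fun _ e => e) ≤ ω → (β.sum fun _ e => e) ≤ ω →
      θ (α + β) = v α * v β

namespace RankOneAux

lemma monMoment_zero {n : ℕ} (x : Fin n → ℝ) : monMoment x 0 = 1 := by
  simp [monMoment]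

lemma monMoment_add {n : ℕ} (x : Fin n → ℝ) (α β : Fin n →₀ ℕ) :
    monMoment x (α + β) = monMoment x α * monMoment x β :=
  Finsupp.prod_add_index' (fun _ => pow_zero _) (fun _ _ _ => pow_add _ _ _)

lemma monMoment_single {n : ℕ} (x : Fin n → ℝ) (i : Fin n) (e : ℕ) :
    monMoment x (Finsupp.single i e) = x i ^ e :=
  Finsupp.prod_single_index (pow_zero _)

lemma apply_le_deg {n : ℕ} (γ : Fin n →₀ ℕ) (i : Fin n) : γ i ≤ γ.sum fun _ e => e := by
  by_cases h : i ∈ γ.support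
  · exact Finset.single_le_sum (fun _ _ => Nat.zero_le _) h
  · simp [Finsupp.notMem_support_iff.mp h]

lemma deg_add {n : ℕ} (α β : Fin n →₀ ℕ) :
    ((α + β).sum fun _ e => e) = (α.sum fun _ e => e) + (β.sum fun _ e => e) :=
  Finsupp.sum_add_index' (fun _ => rfl) (fun _ _ _ => rfl)

lemma deg_eq_zero {n : ℕ} {γ : Fin n →₀ ℕ} (h : (γ.sum fun _ e => e) = 0) : γ = 0 := by
  ext i
  have := apply_le_deg γ i
  simp only [Finsupp.coe_zero, Pi.zero_apply]
  omega

lemma deg_single {n : ℕ} (i : Fin n) (e : ℕ) :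
    ((Finsupp.single i e).sum fun _ e => e) = e :=
  Finsupp.sum_single_index rfl

lemma exists_split {n : ℕ} : ∀ (a b : ℕ) (γ : Fin n →₀ ℕ), (γ.sum fun _ e => e) = a + b →
    ∃ α β : Fin n →₀ ℕ, γ = α + β ∧ (α.sum fun _ e => e) = a ∧ (β.sum fun _ e => e) = b := by
  intro a
  induction a with
  | zero => intro b γ h; exact ⟨0, γ, by simp, by simp, by simpa using h⟩
  | succ a ih =>
    intro b γ h
    obtain ⟨i, hi⟩ : ∃ i, γ i ≠ 0 := by
      by_contra hc; push_neg at hc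
      have : γ = 0 := Finsupp.ext hc
      rw [this] at h; simp at h; omega
    have hle : Finsupp.single i 1 ≤ γ := Finsupp.single_le_iff.mpr (Nat.one_le_iff_ne_zero.mpr hi)
    have hadd : (γ - Finsupp.single i 1) + Finsupp.single i 1 = γ := tsub_add_cancel_of_le hle
    have hdeg : ((γ - Finsupp.single i 1).sum fun _ e => e) = a + b := by
      have h4 := deg_add (γ - Finsupp.single i 1) (Finsupp.single i 1)
      rw [hadd, deg_single] at h4
      omega
    obtain ⟨α, β, h1, h2, h3⟩ := ih b _ hdeg
    refine ⟨α + Finsupp.single i 1, β, ?_, ?_, h3⟩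
    · rw [add_right_comm, ← h1, hadd]
    · rw [deg_add, h2, deg_single]

lemma rankone_moments {n ω : ℕ} {θ : (Fin n →₀ ℕ) → ℝ} (h : RankOneFactor ω θ) :
    ∃ x : Fin n → ℝ, ∀ γ : Fin n →₀ ℕ, (γ.sum fun _ e => e) ≤ 2 * ω → θ γ = monMoment x γ := by
  obtain ⟨v, hv0, hv⟩ := h
  refine ⟨fun i => v (Finsupp.single i 1), ?_⟩
  have key : ∀ N : ℕ, ∀ γ : Fin n →₀ ℕ, (γ.sum fun _ e => e) = N → N ≤ ω →
      v γ = monMoment (fun i => v (Finsupp.single i 1)) γ := by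
    intro N
    induction N with
    | zero => intro γ hγ _; rw [deg_eq_zero hγ, hv0, monMoment_zero]
    | succ N ih =>
      intro γ hγ hN
      obtain ⟨i, hi⟩ : ∃ i, γ i ≠ 0 := by
        by_contra hc; push_neg at hc
        have : γ = 0 := Finsupp.ext hc
        rw [this] at hγ; simp at hγ
      have hle : Finsupp.single i 1 ≤ γ := Finsupp.single_le_iff.mpr (Nat.one_le_iff_ne_zero.mpr hi)
      have hadd : (γ - Finsupp.single i 1) + Finsupp.single i 1 = γ := tsub_add_cancel_of_le hle
      have hdeg : ((γ - Finsupp.single i 1).sum fun _ e => e) = N := by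
        have h4 := deg_add (γ - Finsupp.single i 1) (Finsupp.single i 1)
        rw [hadd, deg_single] at h4
        omega
      have e1 : θ γ = v γ := by
        have := hv γ 0 (by omega) (by simp)
        simpa [hv0] using this
      have e2 : θ γ = v (γ - Finsupp.single i 1) * v (Finsupp.single i 1) := by
        have := hv (γ - Finsupp.single i 1) (Finsupp.single i 1)
          (by omega) (by rw [deg_single]; omega)
        rwa [hadd] at this
      rw [← e1, e2, ih _ hdeg (by omega)]
      conv_rhs => rw [← hadd]
      rw [monMoment_add, monMoment_single, pow_one]
  intro γ hγ
  obtain ⟨α, β, h1, h2, h3⟩ := exists_split (min (γ.sum fun _ e => e) ω)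
    ((γ.sum fun _ e => e) - min (γ.sum fun _ e => e) ω) γ (by omega)
  have hα : (α.sum fun _ e => e) ≤ ω := by omega
  have hβ : (β.sum fun _ e => e) ≤ ω := by omega
  rw [h1, hv α β hα hβ, key _ α rfl hα, key _ β rfl hβ, monMoment_add]

lemma riesz_eq_eval {n : ℕ} (y : (Fin n →₀ ℕ) → ℝ) (x : Fin n → ℝ) (q : MvPolynomial (Fin n) ℝ)
    (h : ∀ γ ∈ q.support, y γ = monMoment x γ) : riesz y q = eval x q := by
  rw [riesz, eval_eq]
  refine Finset.sum_congr rfl fun γ hγ => ?_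
  rw [h γ hγ]
  rfl

lemma riesz_monMoment {n : ℕ} (x : Fin n → ℝ) (q : MvPolynomial (Fin n) ℝ) :
    riesz (monMoment x) q = eval x q :=
  riesz_eq_eval _ _ _ (fun _ _ => rfl)

lemma eval_congr_support {n : ℕ} (q : MvPolynomial (Fin n) ℝ) (x x' : Fin n → ℝ)
    (h : ∀ γ ∈ q.support, ∀ i ∈ γ.support, x i = x' i) : eval x q = eval x' q := by
  rw [eval_eq, eval_eq]
  refine Finset.sum_congr rfl fun γ hγ => ?_
  congr 1
  exact Finset.prod_congr rfl fun i hi => by rw [h γ hγ i hi]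

lemma deg_le_of_mem_support_one_sub {n : ℕ} {q : MvPolynomial (Fin n) ℝ} {γ : Fin n →₀ ℕ}
    (h : γ ∈ (1 - q).support) : (γ.sum fun _ e => e) ≤ q.totalDegree := by
  by_cases h0 : γ ∈ q.support
  · exact MvPolynomial.le_totalDegree h0
  · rw [MvPolynomial.mem_support_iff, MvPolynomial.coeff_sub,
      MvPolynomial.notMem_support_iff.mp h0, sub_zero, MvPolynomial.coeff_one] at h
    split at h
    · rename_i hγ0; subst hγ0; simp
    · simp at h

end RankOneAux

namespace RankOneAux

lemma dirac_feasible {n m p : ℕ} (I : Fin p → Finset (Fin n)) (J : Fin p → Finset (Fin m))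
    (g : Fin m → MvPolynomial (Fin n) ℝ) (k d dmax : ℕ) (x₀ : Fin n → ℝ)
    (hK : ∀ j, 0 ≤ eval x₀ (g j) ∧ eval x₀ (g j) ≤ 1) :
    DualFeasible I J g k d dmax (fun _ => monMoment x₀) (monMoment x₀) := by
  refine ⟨monMoment_zero x₀, fun _ _ _ _ => rfl, ?_, ?_⟩
  · intro ℓ c _
    have hkey : ∑ α ∈ c.support, ∑ β ∈ c.support, c α * c β * monMoment x₀ (α + β)
        = (∑ α ∈ c.support, c α * monMoment x₀ α) * (∑ β ∈ c.support, c β * monMoment x₀ β) := by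
      rw [Finset.sum_mul_sum]
      exact Finset.sum_congr rfl fun α _ => Finset.sum_congr rfl fun β _ => by
        rw [monMoment_add]; ring
    rw [hkey]
    exact mul_self_nonneg _
  · intro ℓ ab _ _
    rw [riesz_monMoment, map_prod]
    refine Finset.prod_nonneg fun j _ => ?_
    rw [map_mul, map_pow, map_pow, map_sub, map_one]
    exact mul_nonneg (pow_nonneg (hK j).1 _) (pow_nonneg (by linarith [(hK j).2]) _)

end RankOneAux


open RankOneAux in
/-- Sufficient condition for finite convergence: if `(θ*¹,…,θ*ᵖ, y*)` is an optimal
solution of the dual Sparse-BSOS SDP of order `d` and every block moment matrix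
`M_ω(θ*ℓ)` has rank one (where `2ω` bounds the degrees of `f` and the `g_j`), then
the dual value equals the global optimum `f*` and the first-order moments
`x* = (y*_γ)_{|γ|=1}` yield a global minimizer of `f` on `K`. -/
theorem rank_one_optimality {n m p : ℕ}
    (I : Fin p → Finset (Fin n)) (J : Fin p → Finset (Fin m))
    (g : Fin m → MvPolynomial (Fin n) ℝ) (f : MvPolynomial (Fin n) ℝ)
    (k d dmax ω : ℕ)
    (hd : 1 ≤ d) (hω : f.totalDegree ≤ 2 * ω ∧ ∀ j, (g j).totalDegree ≤ 2 * ω)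
    (hdmax : 2 * ω ≤ dmax)
    (hg : ∀ ℓ, ∀ j ∈ J ℓ, g j ∈ MvPolynomial.supported ℝ (↑(I ℓ) : Set (Fin n)))
    (hJcover : ∀ j : Fin m, ∃ ℓ, j ∈ J ℓ)
    (hfdec : ∃ F : Fin p → MvPolynomial (Fin n) ℝ, f = ∑ ℓ, F ℓ ∧
      ∀ ℓ, F ℓ ∈ MvPolynomial.supported ℝ (↑(I ℓ) : Set (Fin n)) ∧
        (F ℓ).totalDegree ≤ dmax)
    (fstar : ℝ)
    (hfstar : IsLeast {v : ℝ | ∃ x : Fin n → ℝ,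
      (∀ j, 0 ≤ eval x (g j) ∧ eval x (g j) ≤ 1) ∧ v = eval x f} fstar)
    (θstar : Fin p → (Fin n →₀ ℕ) → ℝ) (ystar : (Fin n →₀ ℕ) → ℝ)
    -- optimal solution of the dual SDP
    (hfeas : DualFeasible I J g k d dmax θstar ystar)
    (hopt : ∀ (θ : Fin p → (Fin n →₀ ℕ) → ℝ) (y : (Fin n →₀ ℕ) → ℝ),
      DualFeasible I J g k d dmax θ y → riesz ystar f ≤ riesz y f)
    -- rank-one condition on each block moment matrix
    (hrank : ∀ ℓ, RankOneFactor ω (θstar ℓ)) :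
    riesz ystar f = fstar ∧
    (∀ j, 0 ≤ eval (fun i => ystar (Finsupp.single i 1)) (g j) ∧
      eval (fun i => ystar (Finsupp.single i 1)) (g j) ≤ 1) ∧
    eval (fun i => ystar (Finsupp.single i 1)) f = fstar := by
  
  classical
  choose xx hxx using fun ℓ => rankone_moments (hrank ℓ)
  set xs : Fin n → ℝ := fun i => ystar (Finsupp.single i 1) with hxs
  obtain ⟨hy0, hagree, hpsd, hpos⟩ := hfeas
  obtain ⟨F, hfF, hF⟩ := hfdec
  -- gluing
  have hglue : ∀ ℓ, ∀ i ∈ I ℓ, 1 ≤ ω → xs i = xx ℓ i := by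
    intro ℓ i hi hω1
    have h1 : ystar (Finsupp.single i 1) = θstar ℓ (Finsupp.single i 1) := by
      apply hagree ℓ
      · intro j hj
        rw [Finsupp.support_single_ne_zero i one_ne_zero] at hj
        simp only [Finset.coe_singleton, Set.mem_singleton_iff] at hj
        subst hj
        exact hi
      · rw [deg_single]; omega
    have h2 : θstar ℓ (Finsupp.single i 1) = monMoment (xx ℓ) (Finsupp.single i 1) :=
      hxx ℓ _ (by rw [deg_single]; omega)
    show ystar (Finsupp.single i 1) = xx ℓ i
    rw [h1, h2, monMoment_single, pow_one]
  -- constraints at xs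
  have hKxs : ∀ j, 0 ≤ eval xs (g j) ∧ eval xs (g j) ≤ 1 := by
    intro j
    obtain ⟨ℓ, hjℓ⟩ := hJcover j
    have hvars : ∀ γ ∈ (g j).support, ∀ i ∈ γ.support, xs i = xx ℓ i := by
      intro γ hγ i hi
      have hiI : i ∈ I ℓ :=
        MvPolynomial.mem_supported.mp (hg ℓ j hjℓ) ((MvPolynomial.mem_vars i).mpr ⟨γ, hγ, hi⟩)
      have hω1 : 1 ≤ ω := by
        have h1 : 1 ≤ γ i := Nat.one_le_iff_ne_zero.mpr (Finsupp.mem_support_iff.mp hi)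
        have h2 := apply_le_deg γ i
        have h3 := MvPolynomial.le_totalDegree hγ
        have h4 := hω.2 j
        omega
      exact hglue ℓ i hiI hω1
    have hevg : eval xs (g j) = eval (xx ℓ) (g j) := eval_congr_support _ _ _ hvars
    have hrg : riesz (θstar ℓ) (g j) = eval (xx ℓ) (g j) :=
      riesz_eq_eval _ _ _ fun γ hγ =>
        hxx ℓ γ (le_trans (MvPolynomial.le_totalDegree hγ) (hω.2 j))
    have hrg1 : riesz (θstar ℓ) (1 - g j) = 1 - eval (xx ℓ) (g j) := by
      rw [riesz_eq_eval _ (xx ℓ) _ fun γ hγ =>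
        hxx ℓ γ (le_trans (deg_le_of_mem_support_one_sub hγ) (hω.2 j))]
      rw [map_sub, map_one]
    have hp1 : 0 ≤ riesz (θstar ℓ) (g j) := by
      have := hpos ℓ ((fun j' => if j' = j then 1 else 0), fun _ => 0)
        (by intro j' h
            by_cases hh : j' = j
            · subst hh; exact hjℓ
            · simp [hh] at h)
        (by simpa using hd)
      have hc : ∀ j' ∈ Finset.univ, g j' ^ (if j' = j then 1 else 0) * (1 - g j') ^ (0:ℕ)
          = if j' = j then g j' else 1 := by
        intro j' _
        by_cases h : j' = j <;> simp [h]
      have hprod : (∏ j', g j' ^ (if j' = j then 1 else 0) * (1 - g j') ^ (0:ℕ)) = g j := by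
        rw [Finset.prod_congr rfl hc, Finset.prod_ite_eq']
        simp
      rwa [hprod] at this
    have hp2 : 0 ≤ riesz (θstar ℓ) (1 - g j) := by
      have := hpos ℓ ((fun _ => 0), (fun j' => if j' = j then 1 else 0))
        (by intro j' h
            by_cases hh : j' = j
            · subst hh; exact hjℓ
            · simp [hh] at h)
        (by simpa using hd)
      have hc : ∀ j' ∈ Finset.univ, g j' ^ (0:ℕ) * (1 - g j') ^ (if j' = j then 1 else 0)
          = if j' = j then 1 - g j' else 1 := by
        intro j' _
        by_cases h : j' = j <;> simp [h]
      have hprod : (∏ j', g j' ^ (0:ℕ) * (1 - g j') ^ (if j' = j then 1 else 0)) = 1 - g j := by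
        rw [Finset.prod_congr rfl hc, Finset.prod_ite_eq']
        simp
      rwa [hprod] at this
    rw [hrg] at hp1
    rw [hrg1] at hp2
    rw [hevg]
    exact ⟨hp1, by linarith⟩
  -- moments of f
  have hyf : ∀ γ ∈ f.support, ystar γ = monMoment xs γ := by
    intro γ hγ
    have hc : coeff γ f ≠ 0 := MvPolynomial.mem_support_iff.mp hγ
    obtain ⟨ℓ, hℓ⟩ : ∃ ℓ, coeff γ (F ℓ) ≠ 0 := by
      by_contra hc2; push_neg at hc2
      apply hc
      rw [hfF, MvPolynomial.coeff_sum]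
      exact Finset.sum_eq_zero fun ℓ _ => hc2 ℓ
    have hγF : γ ∈ (F ℓ).support := MvPolynomial.mem_support_iff.mpr hℓ
    have hsub : ∀ i ∈ γ.support, i ∈ I ℓ := by
      intro i hi
      exact MvPolynomial.mem_supported.mp (hF ℓ).1 ((MvPolynomial.mem_vars i).mpr ⟨γ, hγF, hi⟩)
    have hdγ : (γ.sum fun _ e => e) ≤ 2 * ω := le_trans (MvPolynomial.le_totalDegree hγ) hω.1
    have h1 : ystar γ = θstar ℓ γ :=
      hagree ℓ γ (fun i hi => hsub i hi) (by omega)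
    rw [h1, hxx ℓ γ hdγ]
    simp only [monMoment]
    refine Finsupp.prod_congr fun i hi => ?_
    have hω1 : 1 ≤ ω := by
      have ha : 1 ≤ γ i := Nat.one_le_iff_ne_zero.mpr (Finsupp.mem_support_iff.mp hi)
      have hb := apply_le_deg γ i
      omega
    rw [hglue ℓ i (hsub i hi) hω1]
  have hrf : riesz ystar f = eval xs f := riesz_eq_eval _ _ _ hyf
  obtain ⟨⟨x₀, hx₀K, hx₀f⟩, hlb⟩ := hfstar
  have hub : riesz ystar f ≤ fstar := by
    have h := hopt (fun _ => monMoment x₀) (monMoment x₀)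
      (dirac_feasible I J g k d dmax x₀ hx₀K)
    rw [riesz_monMoment] at h
    rw [hx₀f]
    exact h
  have hlbx : fstar ≤ eval xs f := hlb ⟨xs, hKxs, rfl⟩
  have heq : riesz ystar f = fstar := le_antisymm hub (by rw [hrf]; exact hlbx)
  exact ⟨heq, hKxs, by rw [← hrf, heq]⟩
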